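/- If x* is a maximizer of F(x) = I(x)/‖x‖_∞ over ℝ^n \setminus \{0\}, then any subset S with S^+(x*) ⊆ S ⊆ V \setminus S^-(x*) satisfies cut(S) = max_{S'⊆V} cut(S'), i.e., S realizes a maximum cut. -/
import Mathlib


open Finset

noncomputable def cutVal {n : ℕ} (w : Fin n → Fin n → ℝ) (S : Finset (Fin n)) : ℝ :=
  ∑ i ∈ S, ∑ j ∈ Sᶜ, w i j

noncomputable def Ifun {n : ℕ} (w : Fin n → Fin n → ℝ) (x : Fin n → ℝ) : ℝ :=
  (1 / 2) * ∑ i, ∑ j, w i j * |x i - x j|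

lemma Ifun_two_val {n : ℕ} (w : Fin n → Fin n → ℝ) (hsym : ∀ i j, w i j = w j i)
    (S : Finset (Fin n)) (c : ℝ) (hc : 0 ≤ c) :
    Ifun w (fun i => if i ∈ S then c else -c) = 2 * c * cutVal w S := by
  set z : Fin n → ℝ := fun i => if i ∈ S then c else -c with hz
  have h1 : ∀ i ∈ S, ∑ j, w i j * |z i - z j| = ∑ j ∈ Sᶜ, 2 * c * w i j := by
    intro i hi
    rw [← Finset.sum_add_sum_compl S]
    have e1 : ∑ j ∈ S, w i j * |z i - z j| = 0 := by
      apply Finset.sum_eq_zero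
      intro j hj
      simp [hz, hi, hj]
    have e2 : ∑ j ∈ Sᶜ, w i j * |z i - z j| = ∑ j ∈ Sᶜ, 2 * c * w i j := by
      apply Finset.sum_congr rfl
      intro j hj
      have hj' : j ∉ S := Finset.mem_compl.mp hj
      simp only [hz, hi, hj', if_true, if_false]
      rw [sub_neg_eq_add, abs_of_nonneg (by linarith)]
      ring
    rw [e1, e2, zero_add]
  have h2 : ∀ i ∈ Sᶜ, ∑ j, w i j * |z i - z j| = ∑ j ∈ S, 2 * c * w i j := by
    intro i hi
    have hi' : i ∉ S := Finset.mem_compl.mp hi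
    rw [← Finset.sum_add_sum_compl S]
    have e1 : ∑ j ∈ S, w i j * |z i - z j| = ∑ j ∈ S, 2 * c * w i j := by
      apply Finset.sum_congr rfl
      intro j hj
      simp only [hz, hi', hj, if_true, if_false]
      rw [show -c - c = -(2 * c) by ring, abs_neg, abs_of_nonneg (by linarith)]
      ring
    have e2 : ∑ j ∈ Sᶜ, w i j * |z i - z j| = 0 := by
      apply Finset.sum_eq_zero
      intro j hj
      have hj' : j ∉ S := Finset.mem_compl.mp hj
      simp [hz, hi', hj']
    rw [e1, e2, add_zero]
  have hswap : ∑ i ∈ Sᶜ, ∑ j ∈ S, 2 * c * w i j = ∑ i ∈ S, ∑ j ∈ Sᶜ, 2 * c * w i j := by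
    rw [Finset.sum_comm]
    apply Finset.sum_congr rfl
    intro i _
    apply Finset.sum_congr rfl
    intro j _
    rw [hsym i j]
  have : ∑ i, ∑ j, w i j * |z i - z j| =
      ∑ i ∈ S, (∑ j ∈ Sᶜ, 2 * c * w i j) + ∑ i ∈ Sᶜ, ∑ j ∈ S, 2 * c * w i j := by
    rw [← Finset.sum_add_sum_compl S (fun i => ∑ j, w i j * |z i - z j|)]
    rw [Finset.sum_congr rfl h1, Finset.sum_congr rfl h2]
  rw [Ifun, this, hswap, cutVal, ← Finset.sum_add_distrib, Finset.mul_sum, Finset.mul_sum]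
  apply Finset.sum_congr rfl
  intro i _
  rw [Finset.mul_sum]
  rw [← Finset.sum_add_distrib]
  rw [Finset.mul_sum]
  apply Finset.sum_congr rfl
  intro j _
  ring

lemma Ifun_add_le {n : ℕ} (w : Fin n → Fin n → ℝ) (hnn : ∀ i j, 0 ≤ w i j)
    (y z : Fin n → ℝ) : Ifun w (y + z) ≤ Ifun w y + Ifun w z := by
  have key : ∑ i, ∑ j, w i j * |(y + z) i - (y + z) j| ≤
      ∑ i, ∑ j, (w i j * |y i - y j| + w i j * |z i - z j|) := by
    apply Finset.sum_le_sum
    intro i _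
    apply Finset.sum_le_sum
    intro j _
    rw [← mul_add]
    apply mul_le_mul_of_nonneg_left _ (hnn i j)
    have : (y + z) i - (y + z) j = (y i - y j) + (z i - z j) := by
      simp [Pi.add_apply]; ring
    rw [this]
    exact abs_add_le _ _
  have expand : ∑ i, ∑ j, (w i j * |y i - y j| + w i j * |z i - z j|) =
      (∑ i, ∑ j, w i j * |y i - y j|) + ∑ i, ∑ j, w i j * |z i - z j| := by
    rw [← Finset.sum_add_distrib]
    apply Finset.sum_congr rfl
    intro i _
    rw [Finset.sum_add_distrib]
  rw [Ifun, Ifun, Ifun, ← mul_add]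
  have := key.trans_eq expand
  linarith
lemma Ifun_smul {n : ℕ} (w : Fin n → Fin n → ℝ) (c : ℝ) (hc : 0 ≤ c)
    (x : Fin n → ℝ) : Ifun w (c • x) = c * Ifun w x := by
  have h : ∑ i, ∑ j, w i j * |(c • x) i - (c • x) j| = c * ∑ i, ∑ j, w i j * |x i - x j| := by
    rw [Finset.mul_sum]
    apply Finset.sum_congr rfl
    intro i _
    rw [Finset.mul_sum]
    apply Finset.sum_congr rfl
    intro j _
    simp only [Pi.smul_apply, smul_eq_mul]
    rw [show c * x i - c * x j = c * (x i - x j) by ring, abs_mul, abs_of_nonneg hc]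
    ring
  rw [Ifun, Ifun, h]
  ring

/-- A maximizer of `F(x) = I(x)/‖x‖_∞` yields maximum cuts: any `S` with
`S⁺(x*) ⊆ S ⊆ V \ S⁻(x*)` realizes a maximum cut. -/
theorem stmt2 {n : ℕ} (w : Fin n → Fin n → ℝ)
    (hsym : ∀ i j, w i j = w j i) (hnn : ∀ i j, 0 ≤ w i j)
    (x : Fin n → ℝ) (hx : x ≠ 0)
    (hmax : ∀ y : Fin n → ℝ, y ≠ 0 → Ifun w y / ‖y‖ ≤ Ifun w x / ‖x‖)
    (S : Finset (Fin n))
    (hSp : ∀ i, x i = ‖x‖ → i ∈ S)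
    (hSm : ∀ i, i ∈ S → x i ≠ -‖x‖) :
    ∀ S' : Finset (Fin n), cutVal w S' ≤ cutVal w S := by
  intro S'
  have hN : 0 < ‖x‖ := norm_pos_iff.mpr hx
  set N := ‖x‖ with hNdef
  -- Fin n is nonempty
  have hnpos : 0 < n := by
    rcases Nat.eq_zero_or_pos n with h | h
    · subst h
      exact absurd (Subsingleton.elim x 0) hx
    · exact h
  haveI : Nonempty (Fin n) := ⟨⟨0, hnpos⟩⟩
  have habs : ∀ i, |x i| ≤ N := fun i => by
    have := norm_le_pi_norm x i
    rwa [Real.norm_eq_abs] at this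
  -- on the set where |x i| = N, the indicator of S agrees with x
  set z : Fin n → ℝ := fun i => if i ∈ S then N else -N with hzdef
  have hzx : ∀ i, |x i| = N → z i = x i := by
    intro i hi
    rcases abs_eq (le_of_lt hN) |>.mp hi with h | h
    · have : i ∈ S := hSp i h
      simp [hzdef, this, h]
    · have : i ∉ S := fun hmem => hSm i hmem h
      simp [hzdef, this, h]
  have hzabs : ∀ i, |z i| = N := by
    intro i
    by_cases hi : i ∈ S <;> simp [hzdef, hi, abs_of_nonneg (le_of_lt hN), abs_of_nonpos, hN.le]
  -- choose ε > 0
  set f : Fin n → ℝ := fun i => if |x i| = N then 1 else (N - |x i|) / (2 * N) with hfdef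
  have hfpos : ∀ i, 0 < f i := by
    intro i
    by_cases hi : |x i| = N
    · simp [hfdef, hi]
    · have hlt : |x i| < N := lt_of_le_of_ne (habs i) hi
      simp only [hfdef, hi, if_false]
      apply div_pos (by linarith) (by linarith)
  set ε : ℝ := Finset.univ.inf' Finset.univ_nonempty f with hεdef
  have hεpos : 0 < ε := by
    rw [hεdef, Finset.lt_inf'_iff]
    intro i _
    exact hfpos i
  have hεle : ∀ i, ε ≤ f i := fun i => Finset.inf'_le f (Finset.mem_univ i)
  set y : Fin n → ℝ := fun i => (1 + ε) * x i - ε * z i with hydef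
  -- coordinates where |x i| = N are unchanged
  have hyx : ∀ i, |x i| = N → y i = x i := by
    intro i hi
    simp only [hydef, hzx i hi]
    ring
  -- ‖y‖ = N
  have hyle : ∀ i, |y i| ≤ N := by
    intro i
    by_cases hi : |x i| = N
    · rw [hyx i hi, hi]
    · have hεf : ε ≤ (N - |x i|) / (2 * N) := by
        have := hεle i
        simpa [hfdef, hi] using this
      have h2 : ε * (2 * N) ≤ N - |x i| := by
        rw [← le_div_iff₀ (by positivity)]
        exact hεf
      have : |y i| ≤ (1 + ε) * |x i| + ε * N := by
        calc |y i| ≤ |(1 + ε) * x i| + |ε * z i| := abs_sub _ _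
          _ = (1 + ε) * |x i| + ε * |z i| := by
              rw [abs_mul, abs_mul, abs_of_nonneg (by linarith), abs_of_nonneg hεpos.le]
          _ = (1 + ε) * |x i| + ε * N := by rw [hzabs i]
      nlinarith [habs i, abs_nonneg (x i)]
  have hex : ∃ i0 : Fin n, |x i0| = N := by
    obtain ⟨i0, -, hi0⟩ := Finset.exists_max_image Finset.univ (fun i => |x i|) Finset.univ_nonempty
    refine ⟨i0, le_antisymm (habs i0) ?_⟩
    have : ‖x‖ ≤ |x i0| := by
      rw [pi_norm_le_iff_of_nonneg (abs_nonneg _)]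
      intro i
      rw [Real.norm_eq_abs]
      exact hi0 i (Finset.mem_univ i)
    exact this
  obtain ⟨i0, hi0⟩ := hex
  have hyn : ‖y‖ = N := by
    apply le_antisymm
    · rw [pi_norm_le_iff_of_nonneg hN.le]
      intro i
      rw [Real.norm_eq_abs]
      exact hyle i
    · calc N = |y i0| := by rw [hyx i0 hi0, hi0]
        _ = ‖y i0‖ := (Real.norm_eq_abs _).symm
        _ ≤ ‖y‖ := norm_le_pi_norm y i0
  have hy0 : y ≠ 0 := by
    intro h
    rw [h, norm_zero] at hyn
    exact absurd hyn.symm (ne_of_gt hN)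
  -- maximality: Ifun w y ≤ Ifun w x
  have hIy : Ifun w y ≤ Ifun w x := by
    have := hmax y hy0
    rw [hyn] at this
    exact (div_le_div_iff_of_pos_right hN).mp this
  -- key decomposition: (1+ε) • x = y + ε • z
  have hdec : (1 + ε) • x = y + ε • z := by
    funext i
    simp only [Pi.add_apply, Pi.smul_apply, smul_eq_mul, hydef]
    ring
  have hIx_le_Iz : Ifun w x ≤ Ifun w z := by
    have h1 : (1 + ε) * Ifun w x = Ifun w ((1 + ε) • x) :=
      (Ifun_smul w (1 + ε) (by linarith) x).symm
    have h2 : Ifun w ((1 + ε) • x) ≤ Ifun w y + ε * Ifun w z := by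
      rw [hdec]
      calc Ifun w (y + ε • z) ≤ Ifun w y + Ifun w (ε • z) := Ifun_add_le w hnn y (ε • z)
        _ = Ifun w y + ε * Ifun w z := by rw [Ifun_smul w ε hεpos.le z]
    nlinarith [hIy]
  have hIz : Ifun w z = 2 * N * cutVal w S := Ifun_two_val w hsym S N hN.le
  -- lower bound: 2 * cutVal w S' ≤ Ifun w x / N
  set y' : Fin n → ℝ := fun i => if i ∈ S' then 1 else -1 with hy'def
  have hy'n : ‖y'‖ = 1 := by
    apply le_antisymm
    · rw [pi_norm_le_iff_of_nonneg zero_le_one]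
      intro i
      rw [Real.norm_eq_abs]
      by_cases hi : i ∈ S' <;> simp [hy'def, hi]
    · calc (1:ℝ) = ‖y' i0‖ := by
            rw [Real.norm_eq_abs]
            by_cases hi : i0 ∈ S' <;> simp [hy'def, hi]
        _ ≤ ‖y'‖ := norm_le_pi_norm y' i0
  have hy'0 : y' ≠ 0 := by
    intro h
    rw [h, norm_zero] at hy'n
    exact one_ne_zero hy'n.symm
  have hIy' : Ifun w y' = 2 * cutVal w S' := by
    have := Ifun_two_val w hsym S' 1 zero_le_one
    simpa using this
  have hchain : 2 * cutVal w S' ≤ Ifun w x / N := by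
    have := hmax y' hy'0
    rw [hy'n, div_one, hIy'] at this
    exact this
  have hfinal : Ifun w x / N ≤ 2 * cutVal w S := by
    rw [div_le_iff₀ hN]
    calc Ifun w x ≤ Ifun w z := hIx_le_Iz
      _ = 2 * cutVal w S * N := by rw [hIz]; ring
  linarith
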